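/- Let β be a Salem number of degree s ≥ 4 with minimal polynomial μ over ℚ, and define X_β = { p(β) : p ∈ ℤ[x] and |p(γ)| < 1 for every complex root γ of μ with γ ≠ β }. Then: (1) β·X_β ⊆ X_β, and (2) X_β − X_β is uniformly discrete; more precisely, every nonzero element of (X_β − X_β) − (X_β − X_β) has absolute value > 4^{1−s}, so in particular any two distinct elements of X_β − X_β are at distance > 4^{1−s}. -/

import Mathlib

open scoped Pointwise

noncomputable section

/-- The set `X_β` of real numbers of the form `p(β)`, `p ∈ ℤ[x]`, such that `|p(γ)| < 1` for
every conjugate `γ ≠ β` of `β`. -/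
def salemSet (β : ℝ) : Set ℝ :=
  {x | ∃ p : Polynomial ℤ, x = Polynomial.aeval β p ∧
    ∀ γ : ℂ, Polynomial.aeval γ (minpoly ℚ β) = 0 → γ ≠ (β : ℂ) →
      ‖Polynomial.aeval γ p‖ < 1}

open Polynomial IntermediateField

theorem salem_key (s : ℕ) (hs : 4 ≤ s) (β : ℝ) (hint : IsIntegral ℤ β)
    (hdeg : (minpoly ℚ β).natDegree = s) (q : Polynomial ℤ)
    (hq : ∀ γ : ℂ, Polynomial.aeval γ (minpoly ℚ β) = 0 → γ ≠ (β : ℂ) →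
      ‖Polynomial.aeval γ q‖ < 4)
    (hne : Polynomial.aeval β q ≠ 0) :
    (4 : ℝ) ^ ((1 : ℤ) - s) < |Polynomial.aeval β q| := by
  haveI : DecidableEq (ℚ⟮β⟯ →ₐ[ℚ] ℂ) := Classical.decEq _
  have hintQ : IsIntegral ℚ β := hint.tower_top
  haveI hFD : FiniteDimensional ℚ ℚ⟮β⟯ := adjoin.finiteDimensional hintQ
  set K := ℚ⟮β⟯
  set b : K := AdjoinSimple.gen ℚ β with hbdef
  have hbmap : algebraMap K ℝ b = β := AdjoinSimple.algebraMap_gen ℚ β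
  set x : K := Polynomial.aeval b q with hxdef
  have hxmap : algebraMap K ℝ x = Polynomial.aeval β q := by
    rw [hxdef, ← Polynomial.aeval_algebraMap_apply, hbmap]
  have hx0 : x ≠ 0 := fun h => hne (by rw [← hxmap, h, map_zero])
  -- x is integral over ℤ
  have hb : IsIntegral ℤ b := by
    rw [← isIntegral_algebraMap_iff (algebraMap K ℝ).injective, hbmap]; exact hint
  have hxint : IsIntegral ℤ x := by
    have hmem := Polynomial.aeval_mem_adjoin_singleton ℤ b (p := q)
    have hle : Algebra.adjoin ℤ {b} ≤ integralClosure ℤ K :=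
      Algebra.adjoin_le (Set.singleton_subset_iff.mpr hb)
    exact hle hmem
  -- norm
  set N : ℚ := Algebra.norm ℚ x with hNdef
  have hNint : IsIntegral ℤ N := Algebra.isIntegral_norm ℚ hxint
  obtain ⟨n, hn⟩ := IsIntegrallyClosed.isIntegral_iff.mp hNint
  have hN0 : N ≠ 0 := by
    rw [hNdef, Algebra.norm_ne_zero_iff]; exact hx0
  have hn0 : n ≠ 0 := by rintro rfl; exact hN0 (by rw [← hn]; norm_num)
  have h1N : (1 : ℝ) ≤ ‖algebraMap ℚ ℂ N‖ := by
    rw [← hn, eq_intCast, map_intCast, Complex.norm_intCast]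
    exact_mod_cast Int.one_le_abs hn0
  have hprod := Algebra.norm_eq_prod_embeddings ℚ ℂ x
  -- the distinguished embedding
  set σ₀ : K →ₐ[ℚ] ℂ := (Complex.ofRealAm.restrictScalars ℚ).comp K.val with hσ₀def
  have hσ₀b : σ₀ b = (β : ℂ) := congrArg Complex.ofReal hbmap
  have hσ₀x : σ₀ x = ((Polynomial.aeval β q : ℝ) : ℂ) := congrArg Complex.ofReal hxmap
  -- embeddings and roots
  have hσx : ∀ σ : K →ₐ[ℚ] ℂ, σ x = Polynomial.aeval (σ b) q := fun σ => by
    exact (Polynomial.aeval_algHom_apply (σ.toRingHom.toIntAlgHom) b q).symm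
  have hroot : ∀ σ : K →ₐ[ℚ] ℂ, Polynomial.aeval (σ b) (minpoly ℚ β) = 0 := fun σ => by
    rw [← minpoly_gen ℚ β, Polynomial.aeval_algHom_apply]
    exact (congrArg σ (minpoly.aeval ℚ _)).trans (map_zero σ)
  have hneq : ∀ σ : K →ₐ[ℚ] ℂ, σ ≠ σ₀ → σ b ≠ (β : ℂ) := by
    intro σ hσ hb'
    refine hσ (PowerBasis.algHom_ext (adjoin.powerBasis hintQ) ?_)
    rw [adjoin.powerBasis_gen]
    show σ b = σ₀ b
    rw [hσ₀b]; exact hb'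
  -- cardinality
  have hcard : Fintype.card (K →ₐ[ℚ] ℂ) = s := by
    rw [AlgHom.card, adjoin.finrank hintQ, hdeg]
  -- products
  have habs : (1 : ℝ) ≤ ∏ σ : K →ₐ[ℚ] ℂ, ‖σ x‖ := by
    rw [← norm_prod, ← hprod]; exact h1N
  rw [← Finset.mul_prod_erase Finset.univ _ (Finset.mem_univ σ₀), hσ₀x,
    Complex.norm_real, Real.norm_eq_abs] at habs
  set P : ℝ := ∏ σ ∈ Finset.univ.erase σ₀, ‖σ x‖ with hPdef
  have hPnonneg : 0 ≤ P := Finset.prod_nonneg fun _ _ => norm_nonneg _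
  have hP0 : P ≠ 0 := by
    rintro h
    rw [h, mul_zero] at habs; linarith
  have hPpos : 0 < P := hPnonneg.lt_of_ne (Ne.symm hP0)
  have hlt4 : ∀ σ ∈ Finset.univ.erase σ₀, ‖σ x‖ < 4 := by
    intro σ hσ
    rw [hσx σ]
    exact hq _ (hroot σ) (hneq σ (Finset.ne_of_mem_erase hσ))
  have hcard' : (Finset.univ.erase σ₀).card = s - 1 := by
    rw [Finset.card_erase_of_mem (Finset.mem_univ σ₀), Finset.card_univ, hcard]
  have hne' : (Finset.univ.erase σ₀).Nonempty := by
    rw [← Finset.card_pos, hcard']; omega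
  have hPlt : P < 4 ^ (s - 1) := by
    calc P < ∏ _σ ∈ Finset.univ.erase σ₀, (4 : ℝ) := by
            refine Finset.prod_lt_prod_of_nonempty ?_ hlt4 hne'
            intro σ hσ
            rcases (Finset.prod_ne_zero_iff.mp hP0 σ hσ).lt_or_gt with h | h
            · exact absurd (norm_nonneg _) (not_le.mpr h)
            · exact h
      _ = 4 ^ (s - 1) := by rw [Finset.prod_const, hcard']
  have hz : (1 : ℝ) / P ≤ |Polynomial.aeval β q| := by
    rw [div_le_iff₀ hPpos]; linarith [habs]
  have h4 : (4 : ℝ) ^ ((1 : ℤ) - s) = 1 / 4 ^ (s - 1) := by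
    have : (1 : ℤ) - s = -((s - 1 : ℕ) : ℤ) := by omega
    rw [this, zpow_neg, zpow_natCast, one_div]
  rw [h4]
  calc (1 : ℝ) / 4 ^ (s - 1) < 1 / P := by
        apply one_div_lt_one_div_of_lt hPpos hPlt
    _ ≤ _ := hz

theorem salemSet_sub_sub (s : ℕ) (hs : 4 ≤ s) (β : ℝ) (hint : IsIntegral ℤ β)
    (hdeg : (minpoly ℚ β).natDegree = s) :
    ∀ z ∈ (salemSet β - salemSet β) - (salemSet β - salemSet β), z ≠ 0 →
      (4 : ℝ) ^ ((1 : ℤ) - s) < |z| := by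
  rintro z hz hz0
  obtain ⟨u, hu, v, hv, rfl⟩ := hz
  obtain ⟨a, ⟨p₁, rfl, hp₁⟩, a', ⟨p₂, rfl, hp₂⟩, rfl⟩ := hu
  obtain ⟨c, ⟨p₃, rfl, hp₃⟩, c', ⟨p₄, rfl, hp₄⟩, rfl⟩ := hv
  set q : Polynomial ℤ := p₁ - p₂ - (p₃ - p₄) with hqdef
  have hqβ : Polynomial.aeval β q =
      Polynomial.aeval β p₁ - Polynomial.aeval β p₂ -
        (Polynomial.aeval β p₃ - Polynomial.aeval β p₄) := by
    simp [hqdef]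
  have := salem_key s hs β hint hdeg q ?_ ?_
  · rwa [hqβ] at this
  · intro γ hγ hγβ
    have tri : ∀ a b : ℂ, ‖a - b‖ ≤ ‖a‖ + ‖b‖ := fun a b => by
      exact norm_sub_le a b
    have h1 := hp₁ γ hγ hγβ
    have h2 := hp₂ γ hγ hγβ
    have h3 := hp₃ γ hγ hγβ
    have h4 := hp₄ γ hγ hγβ
    have e : Polynomial.aeval γ q =
        Polynomial.aeval γ p₁ - Polynomial.aeval γ p₂ -
          (Polynomial.aeval γ p₃ - Polynomial.aeval γ p₄) := by simp [hqdef]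
    rw [e]
    calc ‖_‖ ≤ ‖Polynomial.aeval γ p₁ - Polynomial.aeval γ p₂‖ +
          ‖Polynomial.aeval γ p₃ - Polynomial.aeval γ p₄‖ := tri _ _
      _ ≤ (‖Polynomial.aeval γ p₁‖ + ‖Polynomial.aeval γ p₂‖) +
          (‖Polynomial.aeval γ p₃‖ + ‖Polynomial.aeval γ p₄‖) :=
            add_le_add (tri _ _) (tri _ _)
      _ < 4 := by linarith
  · rwa [hqβ]

/-- For a Salem number `β` of degree `s ≥ 4`, the set `X_β` satisfies `βX_β ⊆ X_β` and
`X_β − X_β` is uniformly discrete: every nonzero element of `(X_β − X_β) − (X_β − X_β)` has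
absolute value `> 4^{1−s}`; in particular distinct elements of `X_β − X_β` are at distance
`> 4^{1−s}`. -/
theorem salemSet_inflation_and_meyer (s : ℕ) (hs : 4 ≤ s) (β : ℝ) (hβ : 1 < β)
    (hint : IsIntegral ℤ β) (hdeg : (minpoly ℚ β).natDegree = s)
    (hSalem₁ : ∀ γ : ℂ, Polynomial.aeval γ (minpoly ℚ β) = 0 → γ ≠ (β : ℂ) →
      ‖γ‖ ≤ 1)
    (hSalem₂ : ∃ γ : ℂ, Polynomial.aeval γ (minpoly ℚ β) = 0 ∧ ‖γ‖ = 1) :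
    (∀ x ∈ salemSet β, β * x ∈ salemSet β) ∧
    (∀ z ∈ (salemSet β - salemSet β) - (salemSet β - salemSet β), z ≠ 0 →
      (4 : ℝ) ^ ((1 : ℤ) - s) < |z|) ∧
    (∀ u ∈ salemSet β - salemSet β, ∀ w ∈ salemSet β - salemSet β, u ≠ w →
      (4 : ℝ) ^ ((1 : ℤ) - s) < |u - w|) := by
  have key := salemSet_sub_sub s hs β hint hdeg
  refine ⟨?_, key, ?_⟩
  · rintro x ⟨p, rfl, hp⟩
    refine ⟨Polynomial.X * p, by simp, ?_⟩
    intro γ hγ hγβ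
    rw [map_mul, norm_mul, Polynomial.aeval_X]
    calc ‖γ‖ * ‖Polynomial.aeval γ p‖
        ≤ 1 * ‖Polynomial.aeval γ p‖ :=
          mul_le_mul_of_nonneg_right (hSalem₁ γ hγ hγβ) (norm_nonneg _)
      _ < 1 := by rw [one_mul]; exact hp γ hγ hγβ
  · intro u hu w hw huw
    exact key (u - w) (Set.sub_mem_sub hu hw) (sub_ne_zero_of_ne huw)
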